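/- Binary discrimination of depolarizing channels with a pure unentangled input: Let d ≥ 2 and let φ be any rank-one orthogonal projection (pure state) on ℂ^d. For q ∈ [0,1] set τ_q = q·(1/d)·I_d + (1−q)·φ, a density matrix on ℂ^d. Then for all q0, q1 ∈ [0,1] and u ≥ 1, the Helstrom error probability of the two equiprobable states τ_{q0}^{⊗u} and τ_{q1}^{⊗u} equals f_u((1 − d^{−1})·q0, (1 − d^{−1})·q1). -/

import Mathlib

open Matrix BigOperators Finset ComplexOrder

noncomputable section

/-- A density matrix: positive semidefinite with unit trace. -/
def IsDensityMatrix {ι : Type*} [Fintype ι] (ρ : Matrix ι ι ℂ) : Prop :=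
  ρ.PosSemidef ∧ ρ.trace = 1

/-- The Helstrom minimum error probability for discriminating the states `ρ n`
with prior probabilities `p n`, optimized over all POVMs. -/
def helstrom {ι : Type*} [Fintype ι] [DecidableEq ι] {m : ℕ}
    (ρ : Fin m → Matrix ι ι ℂ) (p : Fin m → ℝ) : ℝ :=
  1 - sSup { x : ℝ | ∃ M : Fin m → Matrix ι ι ℂ,
      (∀ n, (M n).PosSemidef) ∧ (∑ n, M n) = 1 ∧
      x = ∑ n, p n * ((M n * ρ n).trace).re }

open Classical in
/-- The positive semidefinite square root (junk value `0` off the PSD cone). -/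
def psdSqrt {ι : Type*} [Fintype ι] [DecidableEq ι] (A : Matrix ι ι ℂ) : Matrix ι ι ℂ :=
  if h : A.PosSemidef then (h.1.eigenvectorUnitary : Matrix ι ι ℂ) *
    diagonal (fun i => ((Real.sqrt (h.1.eigenvalues i) : ℝ) : ℂ)) *
    star (h.1.eigenvectorUnitary : Matrix ι ι ℂ) else 0

/-- The trace norm `‖A‖₁ = tr √(Aᴴ A)`. -/
def traceNorm {ι : Type*} [Fintype ι] [DecidableEq ι] (A : Matrix ι ι ℂ) : ℝ :=
  ((psdSqrt (Aᴴ * A)).trace).re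

/-- The `u`-fold Kronecker (tensor) power of a square matrix. -/
def tensorPow {ι : Type*} (σ : Matrix ι ι ℂ) (u : ℕ) :
    Matrix (Fin u → ι) (Fin u → ι) ℂ :=
  fun i j => ∏ k, σ (i k) (j k)

/-- The binary error-probability function `f_u(q0,q1)`. -/
def fErr (u : ℕ) (q0 q1 : ℝ) : ℝ :=
  1/2 - (1/4) * ∑ k ∈ Finset.range (u+1),
    (u.choose k : ℝ) * |q0^k * (1-q0)^(u-k) - q1^k * (1-q1)^(u-k)|

/-! ### Auxiliary lemmas -/

section Aux

set_option linter.unusedSectionVars false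
set_option linter.unnecessarySeqFocus false
set_option linter.unusedVariables false

variable {ι : Type*} [Fintype ι] [DecidableEq ι]

lemma tensorPow_mul (A B : Matrix ι ι ℂ) (u : ℕ) :
    tensorPow (A * B) u = tensorPow A u * tensorPow B u := by
  ext i j
  simp only [tensorPow, Matrix.mul_apply]
  rw [Finset.prod_univ_sum]
  simp [Finset.prod_mul_distrib]

lemma tensorPow_conjTranspose (A : Matrix ι ι ℂ) (u : ℕ) :
    tensorPow Aᴴ u = (tensorPow A u)ᴴ := by
  ext i j
  simp [tensorPow, Matrix.conjTranspose_apply, star_prod]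

lemma tensorPow_diagonal (v : ι → ℂ) (u : ℕ) :
    tensorPow (diagonal v) u = diagonal (fun i => ∏ k, v (i k)) := by
  ext i j
  by_cases h : i = j
  · subst h; simp [tensorPow, diagonal_apply_eq]
  · obtain ⟨k, hk⟩ := Function.ne_iff.mp h
    rw [diagonal_apply_ne _ h]
    exact Finset.prod_eq_zero (Finset.mem_univ k) (diagonal_apply_ne _ hk)

lemma tensorPow_one (u : ℕ) : tensorPow (1 : Matrix ι ι ℂ) u = 1 := by
  rw [← Matrix.diagonal_one, tensorPow_diagonal]
  simp

lemma psd_diag_re_nonneg {M : Matrix ι ι ℂ} (hM : M.PosSemidef) (i : ι) :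
    0 ≤ (M i i).re := by
  have h := hM.diag_nonneg (i := i)
  exact (Complex.le_def.mp h).1

lemma helstrom_binary_diag (ρ0 ρ1 : Matrix ι ι ℂ)
    (h1 : ρ1.trace = 1)
    (V : Matrix ι ι ℂ) (hV : V * Vᴴ = 1) (hV' : Vᴴ * V = 1)
    (g : ι → ℝ) (hg : ρ0 - ρ1 = V * Matrix.diagonal (fun i => (g i : ℂ)) * Vᴴ) :
    helstrom ![ρ0, ρ1] ![1/2, 1/2] = 1/2 - (∑ i, max (g i) 0) / 2 := by
  have key : ∀ M0 : Matrix ι ι ℂ,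
      (1/2 : ℝ) * ((M0 * ρ0).trace).re + (1/2) * (((1 - M0) * ρ1).trace).re
      = 1/2 + (∑ i, ((Vᴴ * M0 * V) i i).re * g i) / 2 := by
    intro M0
    have e1 : (1 - M0) * ρ1 = ρ1 - M0 * ρ1 := by rw [sub_mul, one_mul]
    have e2 : (M0 * ρ0).trace - (M0 * ρ1).trace = ((Vᴴ * M0 * V) * diagonal (fun i => (g i : ℂ))).trace := by
      rw [← trace_sub, ← mul_sub, hg, ← mul_assoc, ← mul_assoc,
        trace_mul_cycle (M0 * V) (diagonal fun i => (g i : ℂ)) Vᴴ, ← mul_assoc Vᴴ M0 V]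
    have e3 : ((Vᴴ * M0 * V) * diagonal (fun i => (g i : ℂ))).trace
        = ∑ i, (Vᴴ * M0 * V) i i * (g i : ℂ) := by
      simp [Matrix.trace, Matrix.diag, Matrix.mul_diagonal]
    have e4 : (((Vᴴ * M0 * V) * diagonal (fun i => (g i : ℂ))).trace).re
        = ∑ i, ((Vᴴ * M0 * V) i i).re * g i := by
      rw [e3, Complex.re_sum]
      exact Finset.sum_congr rfl fun i _ => by simp [Complex.mul_re]
    have e5 : ((M0 * ρ0).trace).re - ((M0 * ρ1).trace).re = ∑ i, ((Vᴴ * M0 * V) i i).re * g i := by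
      rw [← e4, ← e2, Complex.sub_re]
    rw [e1, trace_sub, Complex.sub_re, h1]
    simp only [Complex.one_re]
    linarith
  set v : ℝ := 1/2 + (∑ i, max (g i) 0) / 2 with hv
  have hsup : sSup { x : ℝ | ∃ M : Fin 2 → Matrix ι ι ℂ,
      (∀ n, (M n).PosSemidef) ∧ (∑ n, M n) = 1 ∧
      x = ∑ n, (![1/2, 1/2] : Fin 2 → ℝ) n * ((M n * (![ρ0, ρ1] : Fin 2 → Matrix ι ι ℂ) n).trace).re } = v := by
    apply IsGreatest.csSup_eq
    constructor
    · -- membership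
      refine ⟨![V * diagonal (fun i => if 0 < g i then (1:ℂ) else 0) * Vᴴ,
               V * diagonal (fun i => if 0 < g i then (0:ℂ) else 1) * Vᴴ], ?_, ?_, ?_⟩
      · intro n
        fin_cases n <;>
        · refine PosSemidef.mul_mul_conjTranspose_same (PosSemidef.diagonal fun i => ?_) V
          dsimp only
          split <;> simp
      · rw [Fin.sum_univ_two]
        simp only [Matrix.cons_val_zero, Matrix.cons_val_one, Matrix.head_cons]
        rw [← add_mul, ← mul_add, diagonal_add]
        have hD : diagonal (fun i => (if 0 < g i then (1:ℂ) else 0) + (if 0 < g i then (0:ℂ) else 1)) = (1 : Matrix ι ι ℂ) := by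
          ext i j; by_cases hij : i = j <;> simp [Matrix.diagonal_apply, Matrix.one_apply, hij] <;> (try (split <;> simp))
        rw [hD, mul_one, hV]
      · rw [Fin.sum_univ_two]
        simp only [Matrix.cons_val_zero, Matrix.cons_val_one, Matrix.head_cons]
        have hM1 : (1 : Matrix ι ι ℂ) - V * diagonal (fun i => if 0 < g i then (1:ℂ) else 0) * Vᴴ
            = V * diagonal (fun i => if 0 < g i then (0:ℂ) else 1) * Vᴴ := by
          rw [sub_eq_iff_eq_add, ← add_mul, ← mul_add, diagonal_add]
          have hD : diagonal (fun i => (if 0 < g i then (0:ℂ) else 1) + (if 0 < g i then (1:ℂ) else 0)) = (1 : Matrix ι ι ℂ) := by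
            ext i j; by_cases hij : i = j <;> simp [Matrix.diagonal_apply, Matrix.one_apply, hij] <;> (try (split <;> simp))
          rw [hD, mul_one, hV]
        rw [← hM1, key, hv]
        have hN : Vᴴ * (V * diagonal (fun i => if 0 < g i then (1:ℂ) else 0) * Vᴴ) * V
            = diagonal (fun i => if 0 < g i then (1:ℂ) else 0) := by
          rw [← mul_assoc, ← mul_assoc, hV', one_mul, mul_assoc, hV', mul_one]
        rw [hN]
        congr 2
        apply Finset.sum_congr rfl
        intro i _
        by_cases h : 0 < g i
        · simp [diagonal_apply_eq, h, max_eq_left h.le]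
        · simp [diagonal_apply_eq, h, max_eq_right (not_lt.mp h)]
    · -- upper bound
      rintro x ⟨M, hpsd, hsum, rfl⟩
      rw [Fin.sum_univ_two] at hsum ⊢
      simp only [Matrix.cons_val_zero, Matrix.cons_val_one, Matrix.head_cons]
      have hM1 : M 1 = 1 - M 0 := by rw [eq_sub_iff_add_eq, add_comm]; exact hsum
      rw [hM1, key, hv]
      have hb : ∑ i, ((Vᴴ * M 0 * V) i i).re * g i ≤ ∑ i, max (g i) 0 := by
        apply Finset.sum_le_sum
        intro i _
        have hp0 : 0 ≤ ((Vᴴ * M 0 * V) i i).re :=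
          psd_diag_re_nonneg ((hpsd 0).conjTranspose_mul_mul_same V) i
        have hp1 : 0 ≤ ((Vᴴ * M 1 * V) i i).re :=
          psd_diag_re_nonneg ((hpsd 1).conjTranspose_mul_mul_same V) i
        have hsum1 : (Vᴴ * M 0 * V) i i + (Vᴴ * M 1 * V) i i = 1 := by
          have h12 : Vᴴ * M 0 * V + Vᴴ * M 1 * V = 1 := by
            rw [← add_mul, ← mul_add, hsum, mul_one, hV']
          calc (Vᴴ * M 0 * V) i i + (Vᴴ * M 1 * V) i i
              = ((Vᴴ * M 0 * V) + (Vᴴ * M 1 * V)) i i := rfl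
            _ = (1 : Matrix ι ι ℂ) i i := by rw [h12]
            _ = 1 := Matrix.one_apply_eq i
        have hle1 : ((Vᴴ * M 0 * V) i i).re ≤ 1 := by
          have := congrArg Complex.re hsum1
          simp only [Complex.add_re, Complex.one_re] at this
          linarith
        rcases le_or_gt (g i) 0 with h | h
        · calc ((Vᴴ * M 0 * V) i i).re * g i ≤ 0 := mul_nonpos_of_nonneg_of_nonpos hp0 h
            _ ≤ max (g i) 0 := le_max_right _ _
        · calc ((Vᴴ * M 0 * V) i i).re * g i ≤ 1 * g i := mul_le_mul_of_nonneg_right hle1 h.le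
            _ = g i := one_mul _
            _ ≤ max (g i) 0 := le_max_left _ _
      linarith
  rw [helstrom, hsup, hv]
  ring

lemma pascal_sum (D : ℝ) (u : ℕ) (F : ℕ → ℝ) :
    ∑ m ∈ Finset.range (u+2), (((u+1).choose m : ℕ) : ℝ) * D^(u+1-m) * F m
    = (∑ m ∈ Finset.range (u+1), ((u.choose m : ℕ) : ℝ) * D^(u-m) * F (m+1))
      + D * ∑ m ∈ Finset.range (u+1), ((u.choose m : ℕ) : ℝ) * D^(u-m) * F m := by
  rw [Finset.sum_range_succ' (fun m => (((u+1).choose m : ℕ) : ℝ) * D^(u+1-m) * F m) (u+1)]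
  have e1 : ∀ m ∈ Finset.range (u+1),
      ((((u+1).choose (m+1) : ℕ)) : ℝ) * D^(u+1-(m+1)) * F (m+1)
      = ((u.choose m : ℕ) : ℝ) * D^(u-m) * F (m+1) + ((u.choose (m+1) : ℕ) : ℝ) * D^(u-m) * F (m+1) := by
    intro m hm
    rw [Nat.succ_sub_succ, Nat.choose_succ_succ, Nat.cast_add]
    ring
  rw [Finset.sum_congr rfl e1, Finset.sum_add_distrib]
  have e3 : ∑ m ∈ Finset.range (u+1), ((u.choose (m+1) : ℕ) : ℝ) * D^(u-m) * F (m+1)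
      = ∑ m ∈ Finset.range u, ((u.choose (m+1) : ℕ) : ℝ) * D^(u-m) * F (m+1) := by
    rw [Finset.sum_range_succ, Nat.choose_succ_self]
    simp
  have e2 : D * ∑ m ∈ Finset.range (u+1), ((u.choose m : ℕ) : ℝ) * D^(u-m) * F m
      = (∑ m ∈ Finset.range u, ((u.choose (m+1) : ℕ) : ℝ) * D^(u-m) * F (m+1))
        + (((u+1).choose 0 : ℕ) : ℝ) * D^(u+1-0) * F 0 := by
    rw [Finset.mul_sum, Finset.sum_range_succ' (fun m => D * (((u.choose m : ℕ) : ℝ) * D^(u-m) * F m)) u]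
    congr 1
    · apply Finset.sum_congr rfl
      intro m hm
      rw [Finset.mem_range] at hm
      have h2 : u - (m+1) + 1 = u - m := by omega
      rw [← h2, pow_succ]
      ring
    · simp [pow_succ]
      ring
  rw [e3] at *
  linarith [e2]

lemma count_sum (d : ℕ) (j0 : Fin d) :
    ∀ (u : ℕ) (F : ℕ → ℝ),
      ∑ i : Fin u → Fin d, F (∑ k, if i k = j0 then 1 else 0) =
      ∑ m ∈ Finset.range (u+1), ((u.choose m : ℕ) : ℝ) * ((d:ℝ)-1)^(u-m) * F m := by
  intro u
  induction u with
  | zero => intro F; simp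
  | succ u ih =>
    intro F
    have hcard : ((Finset.univ : Finset (Fin d)).card : ℝ) = (d : ℝ) := by simp
    have hj : ∀ (A B : ℝ), ∑ j : Fin d, (if j = j0 then A else B) = A + ((d:ℝ)-1) * B := by
      intro A B
      have : ∀ j : Fin d, (if j = j0 then A else B) = B + (if j = j0 then A - B else 0) := by
        intro j; split <;> ring
      simp only [this, Finset.sum_add_distrib, Finset.sum_const, Finset.sum_ite_eq',
        Finset.mem_univ, if_true, nsmul_eq_mul, hcard]
      ring
    have step : ∑ i : Fin (u+1) → Fin d, F (∑ k, if i k = j0 then 1 else 0)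
        = ∑ p : Fin d × (Fin u → Fin d),
            F (∑ k : Fin (u+1), if (Fin.cons p.1 p.2 : Fin (u+1) → Fin d) k = j0 then 1 else 0) :=
      (Fintype.sum_equiv (Fin.consEquiv fun _ => Fin d)
        (fun p : Fin d × (Fin u → Fin d) =>
          F (∑ k : Fin (u+1), if (Fin.cons p.1 p.2 : Fin (u+1) → Fin d) k = j0 then 1 else 0))
        (fun i => F (∑ k, if i k = j0 then 1 else 0)) (fun p => rfl)).symm
    have inner : ∀ (j : Fin d) (t : Fin u → Fin d),
        (∑ k : Fin (u+1), if (Fin.cons j t : Fin (u+1) → Fin d) k = j0 then 1 else 0)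
        = (if j = j0 then 1 else 0) + ∑ k : Fin u, if t k = j0 then 1 else 0 := by
      intro j t
      rw [Fin.sum_univ_succ]
      simp only [Fin.cons_zero, Fin.cons_succ]
    rw [step, Fintype.sum_prod_type]
    have inner2 : ∀ j : Fin d, ∀ t : Fin u → Fin d,
        F (∑ k : Fin (u+1), if (Fin.cons j t : Fin (u+1) → Fin d) k = j0 then 1 else 0)
        = if j = j0 then F ((∑ k : Fin u, if t k = j0 then 1 else 0) + 1)
          else F (∑ k : Fin u, if t k = j0 then 1 else 0) := by
      intro j t
      rw [inner j t]
      by_cases h : j = j0 <;> simp [h, add_comm]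
    calc ∑ j : Fin d, ∑ t : Fin u → Fin d,
          F (∑ k : Fin (u+1), if (Fin.cons j t : Fin (u+1) → Fin d) k = j0 then 1 else 0)
        = ∑ t : Fin u → Fin d, ∑ j : Fin d,
            (if j = j0 then F ((∑ k : Fin u, if t k = j0 then 1 else 0) + 1)
             else F (∑ k : Fin u, if t k = j0 then 1 else 0)) := by
          rw [Finset.sum_comm]
          exact Finset.sum_congr rfl fun t _ => Finset.sum_congr rfl fun j _ => inner2 j t
      _ = ∑ t : Fin u → Fin d,
            (F ((∑ k : Fin u, if t k = j0 then 1 else 0) + 1)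
             + ((d:ℝ)-1) * F (∑ k : Fin u, if t k = j0 then 1 else 0)) := by
          exact Finset.sum_congr rfl fun t _ => hj _ _
      _ = (∑ t : Fin u → Fin d, F ((∑ k : Fin u, if t k = j0 then 1 else 0) + 1))
          + ((d:ℝ)-1) * ∑ t : Fin u → Fin d, F (∑ k : Fin u, if t k = j0 then 1 else 0) := by
          rw [Finset.sum_add_distrib, Finset.mul_sum]
      _ = (∑ m ∈ Finset.range (u+1), ((u.choose m : ℕ) : ℝ) * ((d:ℝ)-1)^(u-m) * F (m+1))
          + ((d:ℝ)-1) * ∑ m ∈ Finset.range (u+1), ((u.choose m : ℕ) : ℝ) * ((d:ℝ)-1)^(u-m) * F m := by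
          rw [ih (fun m => F (m+1)), ih F]
      _ = ∑ m ∈ Finset.range (u+1+1), (((u+1).choose m : ℕ) : ℝ) * ((d:ℝ)-1)^(u+1-m) * F m :=
          (pascal_sum ((d:ℝ)-1) u F).symm

lemma proj_spectral {d : ℕ} (φ : Matrix (Fin d) (Fin d) ℂ)
    (hherm : φᴴ = φ) (hproj : φ * φ = φ) (htr : φ.trace = 1) :
    ∃ (U : Matrix (Fin d) (Fin d) ℂ) (j0 : Fin d),
      U * Uᴴ = 1 ∧ Uᴴ * U = 1 ∧
      φ = U * Matrix.diagonal (fun i => ((if i = j0 then (1:ℝ) else 0 : ℝ) : ℂ)) * Uᴴ := by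
  have hA : φ.IsHermitian := hherm
  set U : Matrix (Fin d) (Fin d) ℂ := (hA.eigenvectorUnitary : Matrix (Fin d) (Fin d) ℂ) with hUdef
  have hU1 : U * Uᴴ = 1 := by
    rw [← Matrix.star_eq_conjTranspose]
    exact Matrix.mem_unitaryGroup_iff.mp hA.eigenvectorUnitary.2
  have hU2 : Uᴴ * U = 1 := by
    rw [← Matrix.star_eq_conjTranspose]
    exact Matrix.mem_unitaryGroup_iff'.mp hA.eigenvectorUnitary.2
  set c : Fin d → ℂ := RCLike.ofReal ∘ hA.eigenvalues with hcdef
  have spec : φ = U * Matrix.diagonal c * Uᴴ := by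
    rw [← Matrix.star_eq_conjTranspose]
    exact hA.spectral_theorem
  set D : Matrix (Fin d) (Fin d) ℂ := Matrix.diagonal c with hDdef
  have hDD : D * D = D := by
    have h1 : U * (D * D) * Uᴴ = U * D * Uᴴ := by
      calc U * (D * D) * Uᴴ = (U * D) * (D * Uᴴ) := by simp only [Matrix.mul_assoc]
        _ = (U * D) * ((Uᴴ * U) * (D * Uᴴ)) := by rw [hU2, Matrix.one_mul]
        _ = (U * D * Uᴴ) * (U * D * Uᴴ) := by simp only [Matrix.mul_assoc]
        _ = φ * φ := by rw [← spec]
        _ = φ := hproj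
        _ = U * D * Uᴴ := spec
    have h2 := congrArg (fun X => Uᴴ * X * U) h1
    have key : ∀ A : Matrix (Fin d) (Fin d) ℂ, Uᴴ * (U * A * Uᴴ) * U = A := by
      intro A
      calc Uᴴ * (U * A * Uᴴ) * U = (Uᴴ * U) * A * (Uᴴ * U) := by simp only [Matrix.mul_assoc]
        _ = A := by rw [hU2, Matrix.one_mul, Matrix.mul_one]
    rwa [key, key] at h2
  have hev : ∀ i, hA.eigenvalues i = 0 ∨ hA.eigenvalues i = 1 := by
    intro i
    have := congrFun (congrFun (by rwa [hDdef, Matrix.diagonal_mul_diagonal] at hDD :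
      Matrix.diagonal (fun i => c i * c i) = Matrix.diagonal c) i) i
    simp only [Matrix.diagonal_apply_eq] at this
    have hre : hA.eigenvalues i * hA.eigenvalues i = hA.eigenvalues i := by
      have : ((hA.eigenvalues i * hA.eigenvalues i : ℝ) : ℂ) = ((hA.eigenvalues i : ℝ) : ℂ) := by
        push_cast
        simpa [hcdef] using this
      exact_mod_cast this
    have h0 : hA.eigenvalues i * (hA.eigenvalues i - 1) = 0 := by nlinarith [hre]
    rcases mul_eq_zero.mp h0 with h | h
    · left; exact h
    · right; linarith [h]
  have hsum : ∑ i, hA.eigenvalues i = 1 := by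
    have h1 : (U * D * Uᴴ).trace = D.trace := by
      rw [Matrix.trace_mul_cycle U D Uᴴ, hU2, Matrix.one_mul]
    rw [← spec] at h1
    rw [htr] at h1
    have : D.trace = ((∑ i, hA.eigenvalues i : ℝ) : ℂ) := by
      simp [hDdef, Matrix.trace_diagonal, hcdef]
    rw [this] at h1
    exact_mod_cast h1.symm
  have hnn : ∀ i, 0 ≤ hA.eigenvalues i := fun i => by rcases hev i with h | h <;> simp [h]
  have hex : ∃ j0, hA.eigenvalues j0 = 1 := by
    by_contra h
    push_neg at h
    have : ∀ i, hA.eigenvalues i = 0 := fun i => (hev i).resolve_right (h i)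
    simp [this] at hsum
  obtain ⟨j0, hj0⟩ := hex
  refine ⟨U, j0, hU1, hU2, ?_⟩
  have heind : ∀ i, hA.eigenvalues i = if i = j0 then (1:ℝ) else 0 := by
    intro i
    by_cases h : i = j0
    · simp [h, hj0]
    · simp only [h, if_false]
      have h1 : hA.eigenvalues j0 + ∑ i ∈ Finset.univ.erase j0, hA.eigenvalues i = 1 := by
        rw [Finset.add_sum_erase _ _ (Finset.mem_univ j0)]
        exact hsum
      have h2 : ∑ i ∈ Finset.univ.erase j0, hA.eigenvalues i = 0 := by
        rw [hj0] at h1; linarith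
      exact (Finset.sum_eq_zero_iff_of_nonneg (fun i _ => hnn i)).mp h2 i
        (Finset.mem_erase.mpr ⟨h, Finset.mem_univ i⟩)
  have hc : c = fun i => ((if i = j0 then (1:ℝ) else 0 : ℝ) : ℂ) := by
    funext i
    simp only [hcdef, Function.comp_apply, heind i]
    split <;> simp
  rw [spec, hDdef, hc]

lemma tau_diag {d : ℕ} (U : Matrix (Fin d) (Fin d) ℂ) (j0 : Fin d)
    (hU1 : U * Uᴴ = 1) (q : ℝ) :
    (q:ℂ) • ((1/(d:ℂ)) • (1 : Matrix (Fin d) (Fin d) ℂ))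
      + (((1-q : ℝ)):ℂ) • (U * Matrix.diagonal (fun i => ((if i = j0 then (1:ℝ) else 0 : ℝ) : ℂ)) * Uᴴ)
    = U * Matrix.diagonal
        (fun i => ((q * (1/(d:ℝ)) + (1-q) * (if i = j0 then 1 else 0) : ℝ) : ℂ)) * Uᴴ := by
  have e1 : (q:ℂ) • ((1/(d:ℂ)) • (1 : Matrix (Fin d) (Fin d) ℂ))
      = U * (((q:ℂ) * (1/(d:ℂ))) • (1 : Matrix (Fin d) (Fin d) ℂ)) * Uᴴ := by
    rw [Matrix.mul_smul, Matrix.mul_one, Matrix.smul_mul, hU1, smul_smul]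
  have e2 : (((1-q : ℝ)):ℂ) • (U * Matrix.diagonal (fun i => ((if i = j0 then (1:ℝ) else 0 : ℝ) : ℂ)) * Uᴴ)
      = U * ((((1-q : ℝ)):ℂ) • Matrix.diagonal (fun i => ((if i = j0 then (1:ℝ) else 0 : ℝ) : ℂ))) * Uᴴ := by
    rw [Matrix.mul_smul, Matrix.smul_mul]
  rw [e1, e2, ← Matrix.add_mul, ← Matrix.mul_add]
  congr 2
  ext i j
  by_cases hij : i = j
  · subst hij
    simp only [Matrix.add_apply, Matrix.smul_apply, Matrix.one_apply_eq,
      Matrix.diagonal_apply_eq, smul_eq_mul]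
    by_cases hi : i = j0 <;> simp only [hi, if_true, if_false] <;> push_cast <;> ring
  · simp [Matrix.one_apply_ne hij, Matrix.diagonal_apply_ne _ hij]

lemma sum_prod_univ {d u : ℕ} (μ : Fin d → ℝ) :
    ∑ i : Fin u → Fin d, ∏ k, μ (i k) = (∑ j, μ j)^u := by
  have h : (∑ j, μ j)^u = ∏ k : Fin u, ∑ j, μ j := by
    rw [Finset.prod_const, Finset.card_univ, Fintype.card_fin]
  rw [h, Finset.prod_univ_sum]
  simp

end Aux
/-- Binary discrimination of depolarizing channels with a pure unentangled input. -/
theorem helstrom_binary_depolarizing_unentangled (d : ℕ) (hd : 2 ≤ d)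
    (φ : Matrix (Fin d) (Fin d) ℂ)
    (hherm : φᴴ = φ) (hproj : φ * φ = φ) (htr : φ.trace = 1)
    (q0 q1 : ℝ) (h0 : q0 ∈ Set.Icc (0:ℝ) 1) (h1 : q1 ∈ Set.Icc (0:ℝ) 1)
    (u : ℕ) (hu : 1 ≤ u) :
    helstrom
      ![tensorPow ((q0:ℂ) • ((1/(d:ℂ)) • (1 : Matrix (Fin d) (Fin d) ℂ))
          + (((1-q0 : ℝ)):ℂ) • φ) u,
        tensorPow ((q1:ℂ) • ((1/(d:ℂ)) • (1 : Matrix (Fin d) (Fin d) ℂ))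
          + (((1-q1 : ℝ)):ℂ) • φ) u] ![1/2, 1/2]
      = fErr u ((1 - 1/(d:ℝ)) * q0) ((1 - 1/(d:ℝ)) * q1) := by
  classical
  have hd0 : (d:ℝ) ≠ 0 := Nat.cast_ne_zero.mpr (by omega)
  have hd1 : (1:ℝ) ≤ (d:ℝ) := by exact_mod_cast Nat.one_le_of_lt hd
  obtain ⟨U, j0, hU1, hU2, hφ⟩ := proj_spectral φ hherm hproj htr
  set μ : ℝ → Fin d → ℝ :=
    fun q i => q * (1/(d:ℝ)) + (1-q) * (if i = j0 then 1 else 0) with hμdef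
  have hτ : ∀ q : ℝ,
      (q:ℂ) • ((1/(d:ℂ)) • (1 : Matrix (Fin d) (Fin d) ℂ)) + (((1-q : ℝ)):ℂ) • φ
      = U * Matrix.diagonal (fun i => ((μ q i : ℝ) : ℂ)) * Uᴴ := by
    intro q
    rw [hφ]
    exact tau_diag U j0 hU1 q
  set V : Matrix (Fin u → Fin d) (Fin u → Fin d) ℂ := tensorPow U u with hVdef
  have hV1 : V * Vᴴ = 1 := by
    rw [hVdef, ← tensorPow_conjTranspose, ← tensorPow_mul, hU1, tensorPow_one]
  have hV2 : Vᴴ * V = 1 := by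
    rw [hVdef, ← tensorPow_conjTranspose, ← tensorPow_mul, hU2, tensorPow_one]
  have hρ : ∀ q : ℝ, tensorPow (U * Matrix.diagonal (fun i => ((μ q i : ℝ) : ℂ)) * Uᴴ) u
      = V * Matrix.diagonal (fun i : Fin u → Fin d => ((∏ k, μ q (i k) : ℝ) : ℂ)) * Vᴴ := by
    intro q
    rw [tensorPow_mul, tensorPow_mul, tensorPow_conjTranspose, tensorPow_diagonal, hVdef]
    congr 1
    congr 1
    funext i
    push_cast
    rfl
  -- the counting function
  set c : (Fin u → Fin d) → ℕ := fun i => ∑ k, if i k = j0 then 1 else 0 with hcdef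
  set g : (Fin u → Fin d) → ℝ := fun i => (∏ k, μ q0 (i k)) - ∏ k, μ q1 (i k) with hgdef
  have hμsum : ∀ q : ℝ, ∑ j, μ q j = 1 := by
    intro q
    simp only [hμdef, Finset.sum_add_distrib, Finset.sum_const, Finset.card_univ,
      Fintype.card_fin, nsmul_eq_mul, mul_ite, mul_one, mul_zero, Finset.sum_ite_eq',
      Finset.mem_univ, if_true]
    field_simp
    ring
  have hprodsum : ∀ q : ℝ, ∑ i : Fin u → Fin d, ∏ k, μ q (i k) = 1 := by
    intro q
    rw [sum_prod_univ, hμsum q, one_pow]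
  have htrace1 : (tensorPow ((q1:ℂ) • ((1/(d:ℂ)) • (1 : Matrix (Fin d) (Fin d) ℂ))
      + (((1-q1 : ℝ)):ℂ) • φ) u).trace = 1 := by
    rw [hτ q1, hρ q1, Matrix.trace_mul_cycle V _ Vᴴ, hV2, Matrix.one_mul,
      Matrix.trace_diagonal]
    rw [← Complex.ofReal_sum, hprodsum q1, Complex.ofReal_one]
  have hg : (tensorPow ((q0:ℂ) • ((1/(d:ℂ)) • (1 : Matrix (Fin d) (Fin d) ℂ))
        + (((1-q0 : ℝ)):ℂ) • φ) u)
      - (tensorPow ((q1:ℂ) • ((1/(d:ℂ)) • (1 : Matrix (Fin d) (Fin d) ℂ))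
        + (((1-q1 : ℝ)):ℂ) • φ) u)
      = V * Matrix.diagonal (fun i => ((g i : ℝ) : ℂ)) * Vᴴ := by
    rw [hτ q0, hτ q1, hρ q0, hρ q1, ← Matrix.sub_mul, ← Matrix.mul_sub, Matrix.diagonal_sub]
    congr 2
    funext i
    rw [hgdef]
    push_cast
    rfl
  rw [helstrom_binary_diag _ _ htrace1 V hV1 hV2 g hg]
  -- now the arithmetic
  have hgsum : ∑ i, g i = 0 := by
    simp only [hgdef, Finset.sum_sub_distrib, hprodsum q0, hprodsum q1, sub_self]
  have hmax : ∑ i, max (g i) 0 = (∑ i, |g i|) / 2 := by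
    have h : ∀ i, max (g i) 0 = (g i + |g i|) / 2 := by
      intro i
      rcases le_or_gt 0 (g i) with h | h
      · rw [max_eq_left h, abs_of_nonneg h]; ring
      · rw [max_eq_right h.le, abs_of_neg h]; ring
    rw [Finset.sum_congr rfl fun i _ => h i]
    rw [← Finset.sum_div, Finset.sum_add_distrib, hgsum, zero_add]
  -- per-point product formula
  have hprod : ∀ q : ℝ, ∀ i : Fin u → Fin d,
      ∏ k, μ q (i k) = (1 - (1 - 1/(d:ℝ))*q)^(c i) * (q * (1/(d:ℝ)))^(u - c i) := by
    intro q i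
    have hone : ∀ k : Fin u, μ q (i k)
        = if i k = j0 then (1 - (1 - 1/(d:ℝ))*q) else q * (1/(d:ℝ)) := by
      intro k
      by_cases h : i k = j0 <;> simp only [hμdef, h, if_true, if_false, mul_one, mul_zero] <;> ring
    rw [Finset.prod_congr rfl fun k _ => hone k, Finset.prod_ite, Finset.prod_const,
      Finset.prod_const]
    have h2 : (Finset.univ.filter (fun k => i k = j0)).card = c i := by
      rw [hcdef]
      rw [Finset.card_filter]
    have h1 : (Finset.univ.filter (fun k => i k = j0)).card
        + (Finset.univ.filter (fun k => ¬ i k = j0)).card = u := by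
      rw [Finset.card_filter_add_card_filter_not]
      simp
    have h3 : (Finset.univ.filter (fun k => ¬ i k = j0)).card = u - c i := by omega
    rw [h2, h3]
  set F : ℕ → ℝ := fun m =>
    |(1 - (1 - 1/(d:ℝ))*q0)^m * (q0 * (1/(d:ℝ)))^(u-m)
      - (1 - (1 - 1/(d:ℝ))*q1)^m * (q1 * (1/(d:ℝ)))^(u-m)| with hFdef
  have habsg : ∑ i, |g i| = ∑ m ∈ Finset.range (u+1),
      ((u.choose m : ℕ) : ℝ) * ((d:ℝ)-1)^(u-m) * F m := by
    rw [← count_sum d j0 u F]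
    apply Finset.sum_congr rfl
    intro i _
    rw [hgdef, hFdef]
    dsimp only
    rw [hprod q0 i, hprod q1 i]
  -- rewrite each term
  have hDnn : (0:ℝ) ≤ (d:ℝ) - 1 := by linarith
  have hterm : ∀ m ∈ Finset.range (u+1),
      ((u.choose m : ℕ) : ℝ) * ((d:ℝ)-1)^(u-m) * F m
      = ((u.choose m : ℕ) : ℝ) *
        |((1 - 1/(d:ℝ)) * q0)^(u-m) * (1 - (1 - 1/(d:ℝ))*q0)^m
          - ((1 - 1/(d:ℝ)) * q1)^(u-m) * (1 - (1 - 1/(d:ℝ))*q1)^m| := by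
    intro m hm
    rw [hFdef]
    dsimp only
    rw [mul_assoc]
    congr 1
    rw [← abs_of_nonneg (pow_nonneg hDnn (u-m)), ← abs_mul]
    congr 1
    have hq : ∀ q : ℝ, ((d:ℝ)-1)^(u-m) * (q * (1/(d:ℝ)))^(u-m) = ((1 - 1/(d:ℝ)) * q)^(u-m) := by
      intro q
      rw [← mul_pow]
      congr 1
      field_simp
    linear_combination ((1 - (1 - 1/(d:ℝ))*q0)^m) * hq q0 - ((1 - (1 - 1/(d:ℝ))*q1)^m) * hq q1
  rw [Finset.sum_congr rfl hterm] at habsg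
  -- relate to fErr via reflection
  rw [fErr]
  have hreflect : ∑ k ∈ Finset.range (u+1),
      (u.choose k : ℝ) * |((1 - 1/(d:ℝ)) * q0)^k * (1-(1 - 1/(d:ℝ)) * q0)^(u-k)
        - ((1 - 1/(d:ℝ)) * q1)^k * (1-(1 - 1/(d:ℝ)) * q1)^(u-k)|
      = ∑ m ∈ Finset.range (u+1),
      ((u.choose m : ℕ) : ℝ) *
        |((1 - 1/(d:ℝ)) * q0)^(u-m) * (1 - (1 - 1/(d:ℝ))*q0)^m
          - ((1 - 1/(d:ℝ)) * q1)^(u-m) * (1 - (1 - 1/(d:ℝ))*q1)^m| := by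
    rw [← Finset.sum_range_reflect]
    apply Finset.sum_congr rfl
    intro m hm
    rw [Finset.mem_range] at hm
    have hm' : m ≤ u := by omega
    have e1 : u + 1 - 1 - m = u - m := by omega
    have e2 : u - (u - m) = m := by omega
    rw [e1, Nat.choose_symm hm', e2]
  rw [hreflect, ← habsg, hmax]
  ring
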